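/- Let q be a prime power, n a positive integer, and k ≤ n. For every tuple (α_0, …, α_{k-1}) ∈ F_{q^n}^k, the determinant of the k×k Moore matrix whose (r,s) entry is α_r^{q^s} (0 ≤ r, s ≤ k−1) equals the nested product ∏_{j=0}^{k-1} ∏_{(c_0,…,c_{j-1}) ∈ F_q^j} (α_j + c_{j-1}α_{j-1} + ⋯ + c_0α_0). -/
import Mathlib

open Polynomial Finset

/-- Auxiliary: the Moore determinant identity, for any `q ≥ 2` such that
`x ↦ x ^ q` is additive and the set of solutions of `x ^ q = x` has exactly `q`
elements. -/
theorem moore_aux (q : ℕ) (hq2 : 2 ≤ q) {F : Type} [Field F] [Fintype F] [DecidableEq F]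
    (hfrob : ∀ x y : F, (x + y) ^ q = x ^ q + y ^ q)
    (hS : (Finset.univ.filter fun x : F => x ^ q = x).card = q) :
    ∀ (k : ℕ) (α : Fin k → F),
      (Matrix.of fun r s : Fin k => α r ^ q ^ s.val).det =
        ∏ j : Fin k,
          ∏ c ∈ Finset.univ.filter (fun c : Fin j.val → F => ∀ t, c t ^ q = c t),
            (α j + ∑ t : Fin j.val, c t * α ⟨t.val, lt_trans t.isLt j.isLt⟩) := by
  have hq0 : 0 < q := by omega
  -- `x ↦ x ^ q` as an additive monoid hom
  let φ : F →+ F := AddMonoidHom.mk' (fun x : F => x ^ q) hfrob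
  have hadd : ∀ (s : ℕ) (x y : F), (x + y) ^ q ^ s = x ^ q ^ s + y ^ q ^ s := by
    intro s
    induction s with
    | zero => intro x y; simp
    | succ s ih =>
      intro x y
      rw [pow_succ, pow_mul, pow_mul, pow_mul, ih, hfrob]
  let ψ : ℕ → F →+ F := fun s => AddMonoidHom.mk' (fun x : F => x ^ q ^ s) (hadd s)
  have hψ : ∀ (s : ℕ) (x : F), ψ s x = x ^ q ^ s := fun _ _ => rfl
  have hfix : ∀ (s : ℕ) (c : F), c ^ q = c → c ^ q ^ s = c := by
    intro s c hc
    induction s with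
    | zero => simp
    | succ s ih => rw [pow_succ, pow_mul, ih, hc]
  have hcomb : ∀ (s m : ℕ) (c g : Fin m → F), (∀ t, c t ^ q = c t) →
      (∑ t, c t * g t) ^ q ^ s = ∑ t, c t * g t ^ q ^ s := by
    intro s m c g hc
    calc (∑ t, c t * g t) ^ q ^ s = ψ s (∑ t, c t * g t) := rfl
      _ = ∑ t, ψ s (c t * g t) := map_sum (ψ s) _ _
      _ = ∑ t, c t * g t ^ q ^ s := by
          refine Finset.sum_congr rfl fun t _ => ?_
          rw [hψ, mul_pow, hfix s _ (hc t)]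
  -- determinant vanishing from a linear relation with `F_q` coefficients
  have hdet0 : ∀ (m : ℕ) (γ b : Fin m → F), b ≠ 0 → (∀ t, b t ^ q = b t) →
      (∑ t, b t * γ t) = 0 →
      (Matrix.of fun r s : Fin m => γ r ^ q ^ s.val).det = 0 := by
    intro m γ b hb0 hbq hsum
    rw [← Matrix.exists_vecMul_eq_zero_iff]
    refine ⟨b, hb0, ?_⟩
    funext s
    show ∑ r, b r * (Matrix.of fun r s : Fin m => γ r ^ q ^ s.val) r s = 0
    simp only [Matrix.of_apply]
    rw [← hcomb s.val m b γ hbq, hsum, zero_pow (pow_ne_zero _ (by omega))]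
  intro k
  induction k with
  | zero =>
    intro α
    simp [Matrix.det_fin_zero]
  | succ k IH =>
    intro α
    set β : Fin k → F := fun i => α i.castSucc with hβ
    set T := Finset.univ.filter (fun c : Fin k → F => ∀ t, c t ^ q = c t) with hTdef
    have hTcard : T.card = q ^ k := by
      have hTeq : T = Fintype.piFinset
          (fun _ : Fin k => Finset.univ.filter (fun x : F => x ^ q = x)) := by
        ext c
        simp [hTdef, Fintype.mem_piFinset]
      rw [hTeq, Fintype.card_piFinset]
      simp [hS]
    set v : (Fin k → F) → F := fun c => ∑ t, c t * β t with hv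
    have key : (Matrix.of fun r s : Fin (k+1) => α r ^ q ^ s.val).det
        = (Matrix.of fun r s : Fin k => β r ^ q ^ s.val).det *
          ∏ c ∈ T, (α (Fin.last k) + v c) := by
      by_cases hind : ∀ c ∈ T, v c = 0 → c = 0
      · -- independent case: polynomial argument
        set m : Fin (k+1) → Matrix (Fin k) (Fin k) F :=
          fun s => Matrix.of fun r t => β r ^ q ^ (s.succAbove t).val with hm
        set P : F[X] :=
          ∑ s : Fin (k+1), C ((-1) ^ (k + s.val) * (m s).det) * X ^ (q ^ s.val) with hP
        have heval : ∀ x : F, P.eval x =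
            (Matrix.of fun r s : Fin (k+1) =>
              (Fin.snoc β x : Fin (k+1) → F) r ^ q ^ s.val).det := by
          intro x
          rw [Matrix.det_succ_row _ (Fin.last k)]
          rw [hP, eval_finset_sum]
          refine Finset.sum_congr rfl fun s _ => ?_
          have hsub : (Matrix.of fun r s : Fin (k+1) =>
              (Fin.snoc β x : Fin (k+1) → F) r ^ q ^ s.val).submatrix
                (Fin.last k).succAbove s.succAbove = m s := by
            ext r t
            simp [Matrix.submatrix, Fin.succAbove_last, hm]
          rw [hsub]
          simp only [eval_mul, eval_C, eval_pow, eval_X, Matrix.of_apply, Fin.snoc_last,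
            Fin.val_last]
          ring
        have hm_last : m (Fin.last k) = Matrix.of fun r t : Fin k => β r ^ q ^ t.val := by
          ext r t
          simp [hm, Fin.succAbove_last]
        have hcoeff : P.coeff (q ^ k) =
            (Matrix.of fun r t : Fin k => β r ^ q ^ t.val).det := by
          rw [hP, finset_sum_coeff]
          rw [Finset.sum_eq_single (Fin.last k)]
          · rw [coeff_C_mul, coeff_X_pow, Fin.val_last, if_pos rfl, hm_last, mul_one,
              (by omega : k + k = 2 * k), pow_mul]
            simp
          · intro s _ hs
            rw [coeff_C_mul, coeff_X_pow, if_neg, mul_zero]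
            intro h
            exact hs (Fin.ext (by simpa [Fin.val_last] using
              (Nat.pow_right_injective hq2 h.symm)))
          · intro h
            exact absurd (Finset.mem_univ _) h
        have hdeg : P.natDegree ≤ q ^ k := by
          rw [hP]
          refine natDegree_sum_le_of_forall_le _ _ fun s _ => ?_
          refine (natDegree_C_mul_le _ _).trans ?_
          rw [natDegree_X_pow]
          exact Nat.pow_le_pow_right (by omega) (by omega)
        have hvanish : ∀ c ∈ T, P.eval (-(v c)) = 0 := by
          intro c hc
          have hcq : ∀ t, c t ^ q = c t := (Finset.mem_filter.mp hc).2
          rw [heval]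
          refine hdet0 (k+1) _ (Fin.snoc c 1) ?_ ?_ ?_
          · intro h0
            have := congrFun h0 (Fin.last k)
            simp at this
          · intro t
            refine Fin.lastCases ?_ ?_ t
            · simp
            · intro i; simpa using hcq i
          · rw [Fin.sum_univ_castSucc]
            simp only [Fin.snoc_castSucc, Fin.snoc_last, one_mul]
            rw [hv]
            simp
        set D : F := (Matrix.of fun r t : Fin k => β r ^ q ^ t.val).det with hD
        set Q : F[X] := C D * ∏ c ∈ T, (X - C (-(v c))) with hQ
        have hprodmonic : (∏ c ∈ T, (X - C (-(v c)))).Monic :=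
          monic_prod_of_monic _ _ fun c _ => monic_X_sub_C _
        have hproddeg : (∏ c ∈ T, (X - C (-(v c)))).natDegree = q ^ k := by
          rw [natDegree_prod_of_monic _ _ fun c _ => monic_X_sub_C _]
          simp [hTcard]
        have hQdeg : Q.natDegree ≤ q ^ k := by
          rw [hQ]
          exact (natDegree_C_mul_le _ _).trans hproddeg.le
        have hQcoeff : Q.coeff (q ^ k) = D := by
          rw [hQ, coeff_C_mul, ← hproddeg, hprodmonic.coeff_natDegree, mul_one]
        have hQvanish : ∀ c ∈ T, Q.eval (-(v c)) = 0 := by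
          intro c hc
          rw [hQ, eval_mul, eval_prod]
          rw [Finset.prod_eq_zero hc (by simp)]
          ring
        have hinj : Function.Injective (fun c : {c // c ∈ T} => -(v c.1)) := by
          intro c c' h
          simp only [neg_inj] at h
          have hsubT : (c.1 - c'.1) ∈ T := by
            refine Finset.mem_filter.mpr ⟨Finset.mem_univ _, fun t => ?_⟩
            have h1 := ((Finset.mem_filter.mp c.2).2) t
            have h2 := ((Finset.mem_filter.mp c'.2).2) t
            have := map_sub φ (c.1 t) (c'.1 t)
            simp only [AddMonoidHom.mk'_apply, φ] at this
            simpa [h1, h2] using this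
          have hvsub : v (c.1 - c'.1) = 0 := by
            rw [hv]
            simp only [Pi.sub_apply, sub_mul]
            rw [Finset.sum_sub_distrib]
            rw [hv] at h
            simp only at h
            rw [h, sub_self]
          have := hind _ hsubT hvsub
          exact Subtype.ext (sub_eq_zero.mp this)
        have hPQ : P = Q := by
          have hzero : P - Q = 0 := by
            refine eq_zero_of_natDegree_lt_card_of_eval_eq_zero (P - Q) hinj
              (fun c => ?_) ?_
            · rw [eval_sub, hvanish _ c.2, hQvanish _ c.2, sub_zero]
            · rw [Fintype.card_coe, hTcard]
              rcases eq_or_ne (P - Q) 0 with h | h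
              · rw [h, natDegree_zero]
                exact pow_pos hq0 k
              · refine lt_of_le_of_ne ((natDegree_sub_le _ _).trans (by omega : max P.natDegree Q.natDegree ≤ q ^ k)) fun hd => ?_
                have hlc : (P - Q).leadingCoeff ≠ 0 := fun hh => h (leadingCoeff_eq_zero.mp hh)
                apply hlc
                rw [leadingCoeff, hd, coeff_sub, hcoeff, hQcoeff, sub_self]
          exact sub_eq_zero.mp hzero
        have hsnoc : (Fin.snoc β (α (Fin.last k)) : Fin (k+1) → F) = α := by
          funext r
          refine Fin.lastCases ?_ ?_ r
          · simp
          · intro i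
            simp [hβ]
        have hPα := heval (α (Fin.last k))
        rw [hsnoc] at hPα
        rw [← hPα, hPQ, hQ, eval_mul, eval_C, eval_prod]
        congr 1
        refine Finset.prod_congr rfl fun c _ => ?_
        rw [eval_sub, eval_X, eval_C, sub_neg_eq_add]
      · -- dependent case: both sides vanish
        push_neg at hind
        obtain ⟨c, hcT, hcv, hcne⟩ := hind
        have hcq : ∀ t, c t ^ q = c t := (Finset.mem_filter.mp hcT).2
        have h1 : (Matrix.of fun r s : Fin k => β r ^ q ^ s.val).det = 0 :=
          hdet0 k β c hcne hcq hcv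
        have h2 : (Matrix.of fun r s : Fin (k+1) => α r ^ q ^ s.val).det = 0 := by
          refine hdet0 (k+1) α (Fin.snoc c 0) ?_ ?_ ?_
          · intro h0
            apply hcne
            funext t
            have := congrFun h0 t.castSucc
            simpa using this
          · intro t
            refine Fin.lastCases ?_ ?_ t
            · simp [zero_pow (by omega : q ≠ 0)]
            · intro i; simpa using hcq i
          · rw [Fin.sum_univ_castSucc]
            simp only [Fin.snoc_castSucc, Fin.snoc_last, zero_mul, add_zero]
            exact hcv
        rw [h1, h2, zero_mul]
    rw [key, IH β, Fin.prod_univ_castSucc]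
    rfl

theorem stmt_13 (q k n : ℕ) (hq : IsPrimePow q) (hn : 0 < n) (hk : k ≤ n)
    (F : Type) [Field F] [Fintype F] [DecidableEq F]
    (hF : Fintype.card F = q ^ n) (α : Fin k → F) :
    (Matrix.of fun r s : Fin k => α r ^ q ^ s.val).det =
      ∏ j : Fin k,
        ∏ c ∈ Finset.univ.filter (fun c : Fin j.val → F => ∀ t, c t ^ q = c t),
          (α j + ∑ t : Fin j.val, c t * α ⟨t.val, lt_trans t.isLt j.isLt⟩) := by
  have hq2 : 2 ≤ q := hq.two_le
  obtain ⟨p, e, hp, he, rfl⟩ := hq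
  have hpp : Fact p.Prime := ⟨hp.nat_prime⟩
  -- characteristic
  obtain ⟨p', hp'⟩ := CharP.exists F
  obtain ⟨m, hp'prime, hcard'⟩ := FiniteField.card F p'
  have hcard : Fintype.card F = p ^ (e * n) := by rw [hF, ← pow_mul]
  have hpp' : p = p' := by
    have hdvd : p ∣ p' ^ (m : ℕ) := by
      rw [← hcard', hcard]
      exact dvd_pow_self p (Nat.mul_ne_zero (by omega) (by omega))
    have := hp.nat_prime.dvd_of_dvd_pow hdvd
    exact ((Nat.prime_dvd_prime_iff_eq hp.nat_prime hp'prime).mp this)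
  subst hpp'
  -- Frobenius additivity
  have hfrob : ∀ x y : F, (x + y) ^ p ^ e = x ^ p ^ e + y ^ p ^ e := fun x y =>
    add_pow_char_pow x y p e
  -- counting solutions of x ^ q = x
  have hS : (Finset.univ.filter fun x : F => x ^ p ^ e = x).card = p ^ e := by
    set S := Finset.univ.filter fun x : F => x ^ p ^ e = x with hSdef
    have hle : S.card ≤ p ^ e := by
      have hne : ((X : F[X]) ^ p ^ e - X) ≠ 0 :=
        FiniteField.X_pow_card_sub_X_ne_zero F (by omega)
      have hsub : S ⊆ ((X : F[X]) ^ p ^ e - X).roots.toFinset := by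
        intro x hx
        rw [Multiset.mem_toFinset, mem_roots hne]
        have := (Finset.mem_filter.mp hx).2
        simp [IsRoot, this]
      calc S.card ≤ _ := Finset.card_le_card hsub
        _ ≤ Multiset.card ((X : F[X]) ^ p ^ e - X).roots := Multiset.toFinset_card_le _
        _ ≤ ((X : F[X]) ^ p ^ e - X).natDegree := Polynomial.card_roots' _
        _ = p ^ e := FiniteField.X_pow_card_sub_X_natDegree_eq F (by omega)
    have hge : p ^ e ≤ S.card := by
      -- find a unit of order `p ^ e - 1`
      obtain ⟨g, hg⟩ := IsCyclic.exists_generator (α := Fˣ)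
      have horderg : orderOf g = p ^ (e * n) - 1 := by
        rw [orderOf_eq_card_of_forall_mem_zpowers hg, Nat.card_eq_fintype_card, Fintype.card_units, hcard]
      have hdvd : p ^ e - 1 ∣ p ^ (e * n) - 1 := by
        have := Nat.sub_dvd_pow_sub_pow (p ^ e) 1 n
        rwa [one_pow, ← pow_mul] at this
      have hq1 : 0 < p ^ e - 1 := by
        have : 2 ≤ p ^ e := hq2
        omega
      have horderg0 : orderOf g ≠ 0 := by
        rw [horderg]
        have : 2 ≤ p ^ (e * n) := by
          calc 2 ≤ p ^ e := hq2
            _ ≤ p ^ (e * n) := Nat.pow_le_pow_right hp.nat_prime.pos (Nat.le_mul_of_pos_right e hn)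
        omega
      set u : Fˣ := g ^ (orderOf g / (p ^ e - 1)) with hu
      have horderu : orderOf u = p ^ e - 1 := by
        rw [hu]
        exact orderOf_pow_orderOf_div horderg0 (by rw [horderg]; exact hdvd)
      -- injective map from `Fin (p ^ e)` into `S`
      set f : Fin (p ^ e) → F := fun i =>
        if (i : ℕ) < p ^ e - 1 then ((u ^ (i : ℕ) : Fˣ) : F) else 0 with hf
      have hmem : ∀ i, f i ∈ S := by
        intro i
        rw [hSdef, Finset.mem_filter]
        refine ⟨Finset.mem_univ _, ?_⟩
        simp only [hf]
        by_cases hi : (i : ℕ) < p ^ e - 1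
        · rw [if_pos hi]
          have : (u ^ (i : ℕ)) ^ p ^ e = u ^ (i : ℕ) := by
            have h1 : (i : ℕ) * p ^ e = (i : ℕ) * (p ^ e - 1) + (i : ℕ) := by
              have : p ^ e - 1 + 1 = p ^ e := by omega
              calc (i : ℕ) * p ^ e = (i : ℕ) * (p ^ e - 1 + 1) := by rw [this]
                _ = (i : ℕ) * (p ^ e - 1) + (i : ℕ) := by ring
            rw [← pow_mul, h1, pow_add, mul_comm (i : ℕ) (p ^ e - 1), pow_mul,
              ← horderu, pow_orderOf_eq_one, one_pow, one_mul]
          calc ((u ^ (i : ℕ) : Fˣ) : F) ^ p ^ e = (((u ^ (i : ℕ)) ^ p ^ e : Fˣ) : F) := by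
                exact (Units.val_pow_eq_pow_val _ _).symm
            _ = ((u ^ (i : ℕ) : Fˣ) : F) := by rw [this]
        · rw [if_neg hi]
          exact zero_pow (by have := hq2; omega)
      have hinj : Function.Injective f := by
        intro i j hij
        simp only [hf] at hij
        by_cases hi : (i : ℕ) < p ^ e - 1 <;> by_cases hj : (j : ℕ) < p ^ e - 1
        · rw [if_pos hi, if_pos hj] at hij
          have : u ^ (i : ℕ) = u ^ (j : ℕ) := Units.ext hij
          have := pow_injOn_Iio_orderOf (x := u)
            (by rw [horderu]; exact Set.mem_Iio.mpr hi)
            (by rw [horderu]; exact Set.mem_Iio.mpr hj) this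
          exact Fin.ext this
        · rw [if_pos hi, if_neg hj] at hij
          exact absurd hij (Units.ne_zero _)
        · rw [if_neg hi, if_pos hj] at hij
          exact absurd hij.symm (Units.ne_zero _)
        · have hi' := i.isLt
          have hj' := j.isLt
          exact Fin.ext (by omega)
      calc p ^ e = Fintype.card (Fin (p ^ e)) := (Fintype.card_fin _).symm
        _ ≤ S.card := Fintype.card_le_of_injective (fun i => (⟨f i, hmem i⟩ : {x // x ∈ S}))
            (fun i j h => hinj (Subtype.mk_eq_mk.mp h)) |>.trans_eq (Fintype.card_coe S)
    omega
  exact moore_aux (p ^ e) hq2 hfrob hS k α
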